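/- Let α be an irrational real number with 0 < α < 1. For every positive integer N there exists a finite simple graph G in the class K_α whose vertex set is partitioned into two nonempty sets E and F such that −1/N < δ_α(V(G)) − δ_α(F) < 0 and every triangle (3-element clique) of G has all three of its vertices in F. -/

import Mathlib

set_option maxHeartbeats 1000000


/-- The set of edges of `G` with both endpoints in `S`. -/
def edgesWithin {V : Type*} (G : SimpleGraph V) (S : Set V) : Set (Sym2 V) :=
  {e | e ∈ G.edgeSet ∧ ∀ v ∈ e, v ∈ S}

/-- The predimension `δ_α(S) = |S| − α · e(S)`. -/
noncomputable def delta {V : Type*} (α : ℝ) (G : SimpleGraph V) (S : Set V) : ℝ :=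
  (S.ncard : ℝ) - α * ((edgesWithin G S).ncard : ℝ)

/-- `G` belongs to the class `K_α`: every set of vertices has nonnegative predimension. -/
def InK {V : Type*} (α : ℝ) (G : SimpleGraph V) : Prop :=
  ∀ S : Set V, 0 ≤ delta α G S

/-- For irrational `α ∈ (0,1)` and every positive integer `N`, there is a finite graph
`G ∈ K_α` whose vertex set is partitioned into nonempty sets `E` and `F` such that
`-1/N < δ_α(V(G)) − δ_α(F) < 0` and every triangle of `G` has all its vertices in `F`. -/

lemma floor_step_up (x ε : ℝ) (hx : 0 < x) (hxε : x < ε) :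
    ∃ t : ℕ, 0 < t ∧ 1 < (t:ℝ) * x ∧ (t:ℝ) * x < 1 + ε := by
  refine ⟨⌊1/x⌋₊ + 1, Nat.succ_pos _, ?_, ?_⟩
  · have h := Nat.lt_floor_add_one (1/x)
    have h2 := mul_lt_mul_of_pos_right h hx
    rw [one_div_mul_cancel (ne_of_gt hx)] at h2
    push_cast
    linarith
  · have h := Nat.floor_le (le_of_lt (one_div_pos.mpr hx))
    have h2 := mul_le_mul_of_nonneg_right h (le_of_lt hx)
    rw [one_div_mul_cancel (ne_of_gt hx)] at h2
    push_cast
    nlinarith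

lemma floor_step_down (x ε : ℝ) (hx : 0 < x) (hxε : x < ε) (hε : (2:ℝ) ≤ 1/ε) :
    ∃ t : ℕ, 2 ≤ t ∧ (t:ℝ) * x ≤ 1 ∧ 1 - x < (t:ℝ) * x := by
  refine ⟨⌊1/x⌋₊, ?_, ?_, ?_⟩
  · have h2 : (2:ℝ) ≤ 1/x :=
      le_trans hε (one_div_le_one_div_of_le hx (le_of_lt hxε))
    exact Nat.le_floor (by exact_mod_cast h2)
  · have h := Nat.floor_le (le_of_lt (one_div_pos.mpr hx))
    have h2 := mul_le_mul_of_nonneg_right h (le_of_lt hx)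
    rwa [one_div_mul_cancel (ne_of_gt hx)] at h2
  · have h := Nat.lt_floor_add_one (1/x)
    have h2 := mul_lt_mul_of_pos_right h hx
    rw [one_div_mul_cancel (ne_of_gt hx)] at h2
    nlinarith

lemma approx_key (α : ℝ) (hirr : Irrational α) (h0 : 0 < α) (ε : ℝ)
    (hε : 0 < ε) (hε2 : ε ≤ 1/2) :
    ∃ a k : ℕ, 0 < a ∧ 0 < k ∧ (a : ℝ) < k * α ∧ (k : ℝ) * α < a + ε := by
  have hεinv : (2:ℝ) ≤ 1/ε := by rw [le_div_iff₀ hε]; linarith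
  obtain ⟨n, hn2, hnge⟩ : ∃ n : ℕ, (2:ℝ) ≤ (n:ℝ) ∧ 1/ε ≤ (n:ℝ) :=
    ⟨⌈1/ε⌉₊, le_trans hεinv (Nat.le_ceil _), Nat.le_ceil _⟩
  have n_pos : 0 < n := by
    have : (0:ℝ) < n := by linarith
    exact_mod_cast this
  obtain ⟨j, k0, hk0, -, habs⟩ := Real.exists_int_int_abs_mul_sub_le α n_pos
  have h1n : 1 / ((n:ℝ) + 1) < ε := by
    rw [div_lt_iff₀ (by linarith)]
    have h : 1/ε < (n:ℝ) + 1 := lt_of_le_of_lt hnge (by linarith)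
    calc (1:ℝ) = ε * (1/ε) := by field_simp
    _ < ε * ((n:ℝ)+1) := by exact (mul_lt_mul_iff_right₀ hε).mpr h
  have hβabs : |(k0:ℝ) * α - (j:ℝ)| < ε := lt_of_le_of_lt habs h1n
  have hirrk : ∀ t : ℤ, t ≠ 0 → Irrational ((t:ℝ) * α) := fun t ht => hirr.intCast_mul ht
  have hβ0 : (k0:ℝ) * α - (j:ℝ) ≠ 0 := by
    intro h
    exact (hirrk k0 (ne_of_gt hk0)).ne_int j (by linarith)
  have hβlt : (k0:ℝ) * α - (j:ℝ) < ε := (abs_lt.mp hβabs).2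
  have hβgt : -ε < (k0:ℝ) * α - (j:ℝ) := (abs_lt.mp hβabs).1
  have hk0α : 0 < (k0:ℝ) * α := mul_pos (by exact_mod_cast hk0) h0
  have hk0r : ((k0.toNat : ℕ) : ℝ) = (k0:ℝ) := by
    exact_mod_cast congrArg (Int.cast : ℤ → ℝ) (Int.toNat_of_nonneg (le_of_lt hk0))
  rcases lt_or_gt_of_ne hβ0 with hneg | hpos
  · -- k0 α = j - γ with γ := j - k0 α ∈ (0, ε), j ≥ 1
    have hγpos : 0 < (j:ℝ) - (k0:ℝ) * α := by linarith
    have hγlt : (j:ℝ) - (k0:ℝ) * α < ε := by linarith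
    have hj1 : 1 ≤ j := by
      by_contra h
      push_neg at h
      have : (j:ℝ) ≤ 0 := by exact_mod_cast Int.lt_add_one_iff.mp h
      nlinarith
    have hjr : ((j.toNat : ℕ) : ℝ) = (j:ℝ) := by
      exact_mod_cast congrArg (Int.cast : ℤ → ℝ) (Int.toNat_of_nonneg (by omega))
    obtain ⟨t, ht2, htle, htgt⟩ := floor_step_down _ ε hγpos hγlt hεinv
    have htne : (t:ℝ) * ((j:ℝ) - (k0:ℝ) * α) ≠ 1 := by
      intro h
      have htk0 : (t:ℤ) * k0 ≠ 0 := by positivity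
      apply (hirrk ((t:ℤ) * k0) htk0).ne_int ((t:ℤ) * j - 1)
      push_cast
      nlinarith
    have htlt : (t:ℝ) * ((j:ℝ) - (k0:ℝ) * α) < 1 := lt_of_le_of_ne htle htne
    have hjt2 : 2 ≤ t * j.toNat := by
      calc 2 = 2 * 1 := by ring
      _ ≤ t * j.toNat := Nat.mul_le_mul ht2 (by omega)
    have hc1 : ((t * j.toNat - 1 : ℕ) : ℝ) = (t:ℝ) * (j:ℝ) - 1 := by
      rw [Nat.cast_sub (by omega : 1 ≤ t * j.toNat), Nat.cast_mul, hjr, Nat.cast_one]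
    have hc2 : ((t * k0.toNat : ℕ) : ℝ) * α = (t:ℝ) * ((k0:ℝ) * α) := by
      rw [Nat.cast_mul, hk0r, mul_assoc]
    refine ⟨t * j.toNat - 1, t * k0.toNat, by omega, ?_, ?_, ?_⟩
    · have : 0 < k0.toNat := by omega
      positivity
    · rw [hc1, hc2]; nlinarith
    · rw [hc1, hc2]; nlinarith
  · -- β > 0
    have hj0 : 0 ≤ j := by
      by_contra h
      push_neg at h
      have h1 : j ≤ -1 := by omega
      have h2 : (j:ℝ) ≤ -1 := by exact_mod_cast h1
      linarith
    rcases eq_or_lt_of_le hj0 with hj | hj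
    · -- j = 0 : k0 α ∈ (0, ε)
      have hkαε : (k0:ℝ) * α < ε := by
        have : (j:ℝ) = 0 := by exact_mod_cast hj.symm
        linarith
      obtain ⟨t, htpos, htgt, htle⟩ := floor_step_up _ ε hk0α hkαε
      have hc : ((t * k0.toNat : ℕ):ℝ) * α = (t:ℝ) * ((k0:ℝ) * α) := by
        rw [Nat.cast_mul, hk0r, mul_assoc]
      refine ⟨1, t * k0.toNat, one_pos, ?_, ?_, ?_⟩
      · have : 0 < k0.toNat := by omega
        positivity
      · rw [hc, Nat.cast_one]; linarith
      · rw [hc, Nat.cast_one]; linarith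
    · -- j ≥ 1
      have hjr : ((j.toNat : ℕ) : ℝ) = (j:ℝ) := by
        exact_mod_cast congrArg (Int.cast : ℤ → ℝ) (Int.toNat_of_nonneg hj0)
      refine ⟨j.toNat, k0.toNat, by omega, by omega, ?_, ?_⟩
      · rw [hjr, hk0r]; linarith
      · rw [hjr, hk0r]; linarith

section Star

/-- the star graph on `Fin (a+k)` with center `0` and leaves `a, ..., a+k-1`. -/
def starG (a k : ℕ) : SimpleGraph (Fin (a + k)) where
  Adj u v := u ≠ v ∧ (((u : ℕ) = 0 ∧ a ≤ (v : ℕ)) ∨ ((v : ℕ) = 0 ∧ a ≤ (u : ℕ)))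
  symm := by constructor; intro u v h; exact ⟨h.1.symm, h.2.symm⟩
  loopless := by constructor; intro u h; exact h.1 rfl

lemma starG_adj {a k : ℕ} {u v : Fin (a + k)} :
    (starG a k).Adj u v ↔
      u ≠ v ∧ (((u : ℕ) = 0 ∧ a ≤ (v : ℕ)) ∨ ((v : ℕ) = 0 ∧ a ≤ (u : ℕ))) :=
  Iff.rfl

lemma zero_mem_edge {a k : ℕ} (ha : 0 < a) {e : Sym2 (Fin (a + k))}
    (he : e ∈ (starG a k).edgeSet) :
    ∃ w : Fin (a + k), a ≤ (w : ℕ) ∧ e = s(⟨0, by omega⟩, w) := by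
  induction e with
  | _ u v =>
    rw [SimpleGraph.mem_edgeSet, starG_adj] at he
    rcases he with ⟨-, ⟨hu, hv⟩ | ⟨hv, hu⟩⟩
    · have hu' : u = ⟨0, by omega⟩ := Fin.ext hu
      exact ⟨v, hv, by rw [hu']⟩
    · have hv' : v = ⟨0, by omega⟩ := Fin.ext hv
      exact ⟨u, hu, by rw [hv', Sym2.eq_swap]⟩

lemma edgesWithin_subset {a k : ℕ} (ha : 0 < a) (S : Set (Fin (a + k))) :
    edgesWithin (starG a k) S ⊆
      (fun w => s((⟨0, by omega⟩ : Fin (a + k)), w)) '' ({w | a ≤ (w : ℕ)} ∩ S) := by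
  rintro e ⟨he, hsub⟩
  obtain ⟨w, hw, rfl⟩ := zero_mem_edge ha he
  exact ⟨w, ⟨hw, hsub w (by simp)⟩, rfl⟩

lemma edgesWithin_univ {a k : ℕ} (ha : 0 < a) :
    edgesWithin (starG a k) Set.univ =
      (fun w => s((⟨0, by omega⟩ : Fin (a + k)), w)) '' {w | a ≤ (w : ℕ)} := by
  apply Set.Subset.antisymm
  · have := edgesWithin_subset (k := k) ha Set.univ
    simpa using this
  · rintro e ⟨w, hw, rfl⟩
    refine ⟨?_, fun v _ => Set.mem_univ v⟩
    rw [SimpleGraph.mem_edgeSet, starG_adj]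
    have : a ≤ (w:ℕ) := hw
    refine ⟨fun h => by have := congrArg Fin.val h; simp at this; omega, Or.inl ⟨rfl, hw⟩⟩

lemma edgesWithin_F {a k : ℕ} (ha : 0 < a) :
    edgesWithin (starG a k) {w : Fin (a + k) | a ≤ (w : ℕ)} = ∅ := by
  ext e
  simp only [Set.mem_empty_iff_false, iff_false]
  rintro ⟨he, hsub⟩
  obtain ⟨w, hw, rfl⟩ := zero_mem_edge ha he
  have := hsub ⟨0, by omega⟩ (by simp)
  simp only [Set.mem_setOf_eq] at this
  omega

lemma mk_inj {a k : ℕ} (ha : 0 < a) :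
    Function.Injective (fun w => s((⟨0, by omega⟩ : Fin (a + k)), w)) := by
  intro w1 w2 h
  simp only [Sym2.eq_iff] at h
  rcases h with ⟨-, h⟩ | ⟨h1, h2⟩
  · exact h
  · rw [← h1, h2]

lemma F_ncard {a k : ℕ} : ({w : Fin (a + k) | a ≤ (w : ℕ)}).ncard = k := by
  have : {w : Fin (a + k) | a ≤ (w : ℕ)} =
      (fun j : Fin k => (⟨a + (j : ℕ), by omega⟩ : Fin (a + k))) '' Set.univ := by
    ext w
    simp only [Set.mem_setOf_eq, Set.image_univ, Set.mem_range]
    constructor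
    · intro hw
      exact ⟨⟨(w : ℕ) - a, by have := w.isLt; omega⟩, by apply Fin.ext; simp; omega⟩
    · rintro ⟨j, rfl⟩; simp
  rw [this, Set.ncard_image_of_injective _ (fun j1 j2 h => by
    have h' : a + (j1:ℕ) = a + (j2:ℕ) := congrArg Fin.val h
    exact Fin.ext (by omega)), Set.ncard_univ, Nat.card_eq_fintype_card, Fintype.card_fin]

end Star

lemma starG_edges_univ_ncard {a k : ℕ} (ha : 0 < a) :
    (edgesWithin (starG a k) Set.univ).ncard = k := by
  rw [edgesWithin_univ ha, Set.ncard_image_of_injective _ (mk_inj ha), F_ncard]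

lemma starG_InK {a k : ℕ} (ha : 0 < a) {α : ℝ} (h0 : 0 < α) (h1 : α < 1) :
    InK α (starG a k) := by
  intro S
  have hle : (edgesWithin (starG a k) S).ncard ≤ S.ncard := by
    calc (edgesWithin (starG a k) S).ncard
        ≤ ((fun w => s((⟨0, by omega⟩ : Fin (a + k)), w)) ''
            ({w | a ≤ (w : ℕ)} ∩ S)).ncard :=
          Set.ncard_le_ncard (edgesWithin_subset ha S) (Set.toFinite _)
      _ = ({w : Fin (a+k) | a ≤ (w : ℕ)} ∩ S).ncard :=
          Set.ncard_image_of_injective _ (mk_inj ha)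
      _ ≤ S.ncard := Set.ncard_le_ncard Set.inter_subset_right (Set.toFinite _)
  have hc : ((edgesWithin (starG a k) S).ncard : ℝ) ≤ (S.ncard : ℝ) := by exact_mod_cast hle
  have he : (0:ℝ) ≤ ((edgesWithin (starG a k) S).ncard : ℝ) := by positivity
  unfold delta
  nlinarith

lemma starG_no_triangle {a k : ℕ} (ha : 0 < a) (T : Finset (Fin (a + k)))
    (hT : (starG a k).IsNClique 3 T) : False := by
  obtain ⟨x, y, z, hxy, hxz, hyz, rfl⟩ := Finset.card_eq_three.mp hT.2
  have h1 := (hT.1 (by simp) (by simp) hxy : (starG a k).Adj x y).2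
  have h2 := (hT.1 (by simp) (by simp) hxz : (starG a k).Adj x z).2
  have h3 := (hT.1 (by simp) (by simp) hyz : (starG a k).Adj y z).2
  rcases h1 with ⟨h1a, h1b⟩ | ⟨h1a, h1b⟩ <;>
    rcases h2 with ⟨h2a, h2b⟩ | ⟨h2a, h2b⟩ <;>
      rcases h3 with ⟨h3a, h3b⟩ | ⟨h3a, h3b⟩ <;> omega

theorem exists_graph_small_relative_delta (α : ℝ) (hirr : Irrational α)
    (h0 : 0 < α) (h1 : α < 1) (N : ℕ) (hN : 0 < N) :
    ∃ (m : ℕ) (G : SimpleGraph (Fin m)), InK α G ∧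
      ∃ E F : Set (Fin m), E.Nonempty ∧ F.Nonempty ∧ Disjoint E F ∧ E ∪ F = Set.univ ∧
        -(1 / (N : ℝ)) < delta α G Set.univ - delta α G F ∧
        delta α G Set.univ - delta α G F < 0 ∧
        ∀ T : Finset (Fin m), G.IsNClique 3 T → ↑T ⊆ F := by
  have hNpos : (0:ℝ) < 1 / (N:ℝ) := by positivity
  set ε : ℝ := min (1 / (N:ℝ)) (1/2) with hε
  have hεpos : 0 < ε := lt_min hNpos (by norm_num)
  have hε2 : ε ≤ 1/2 := min_le_right _ _
  have hεN : ε ≤ 1 / (N:ℝ) := min_le_left _ _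
  obtain ⟨a, k, ha, hk, hlow, hhigh⟩ := approx_key α hirr h0 ε hεpos hε2
  refine ⟨a + k, starG a k, starG_InK ha h0 h1,
    {v : Fin (a+k) | (v : ℕ) < a}, {v : Fin (a+k) | a ≤ (v : ℕ)},
    ⟨⟨0, by omega⟩, ha⟩, ⟨⟨a, by omega⟩, by simp⟩, ?_, ?_, ?_, ?_, ?_⟩
  · rw [Set.disjoint_left]
    intro v hv hv'
    simp only [Set.mem_setOf_eq] at hv hv'
    omega
  · ext v
    simp only [Set.mem_union, Set.mem_setOf_eq, Set.mem_univ, iff_true]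
    omega
  · have hdiff : delta α (starG a k) Set.univ -
        delta α (starG a k) {v : Fin (a+k) | a ≤ (v : ℕ)} = (a:ℝ) - (k:ℝ) * α := by
      unfold delta
      rw [starG_edges_univ_ncard ha, edgesWithin_F ha, F_ncard, Set.ncard_univ,
        Nat.card_eq_fintype_card, Fintype.card_fin, Set.ncard_empty]
      push_cast
      ring
    rw [hdiff]
    have : (k:ℝ) * α < (a:ℝ) + 1 / (N:ℝ) := by linarith
    linarith
  · have hdiff : delta α (starG a k) Set.univ -
        delta α (starG a k) {v : Fin (a+k) | a ≤ (v : ℕ)} = (a:ℝ) - (k:ℝ) * α := by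
      unfold delta
      rw [starG_edges_univ_ncard ha, edgesWithin_F ha, F_ncard, Set.ncard_univ,
        Nat.card_eq_fintype_card, Fintype.card_fin, Set.ncard_empty]
      push_cast
      ring
    rw [hdiff]
    linarith
  · intro T hT
    exact absurd hT (fun h => starG_no_triangle ha T h)
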